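/- The function φ defined by φ(t) = f(h₂⁻¹(t)) for t ∈ [0, log 2], where f(y) = −(1−y) log(1−y), is nondecreasing on [0, log 2]. -/

import Mathlib

/-- The binary entropy function (natural logarithm). -/
noncomputable def binEnt (x : ℝ) : ℝ := -(x * Real.log x) - (1 - x) * Real.log (1 - x)

/-- The function `f(y) = -(1-y) log(1-y)`. -/
noncomputable def fFun (y : ℝ) : ℝ := -((1 - y) * Real.log (1 - y))

lemma hasDerivAt_sub_mul_log {x : ℝ} (hx : 1 - x ≠ 0) :
    HasDerivAt (fun y : ℝ => (1 - y) * Real.log (1 - y)) (-(Real.log (1 - x) + 1)) x := by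
  have h := (Real.hasDerivAt_mul_log hx).comp x ((hasDerivAt_id x).const_sub 1)
  refine (h : HasDerivAt (fun y : ℝ => (1 - y) * Real.log (1 - y)) _ x).congr_deriv ?_
  ring

lemma binEnt_hasDeriv {x : ℝ} (hx : x ≠ 0) (hx1 : 1 - x ≠ 0) :
    HasDerivAt binEnt (Real.log (1 - x) - Real.log x) x := by
  have h := ((Real.hasDerivAt_mul_log hx).neg).sub (hasDerivAt_sub_mul_log hx1)
  refine (h : HasDerivAt binEnt _ x).congr_deriv ?_
  ring

lemma binEnt_cont : Continuous binEnt := by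
  have h1 : Continuous fun x : ℝ => x * Real.log x := Real.continuous_mul_log
  have h2 : Continuous fun x : ℝ => (1 - x) * Real.log (1 - x) :=
    h1.comp (continuous_const.sub continuous_id)
  exact h1.neg.sub h2

lemma binEnt_strictMono : StrictMonoOn binEnt (Set.Icc 0 (1/2)) := by
  apply strictMonoOn_of_deriv_pos (convex_Icc _ _) binEnt_cont.continuousOn
  intro x hx
  rw [interior_Icc] at hx
  have hx0 : x ≠ 0 := ne_of_gt hx.1
  have hx1 : (1 : ℝ) - x ≠ 0 := by
    have := hx.2; intro h; linarith [(by linarith : x < (1:ℝ))]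
  rw [(binEnt_hasDeriv hx0 hx1).deriv]
  have hlt : Real.log x < Real.log (1 - x) :=
    Real.log_lt_log hx.1 (by nlinarith [hx.2])
  linarith

lemma fFun_mono : MonotoneOn fFun (Set.Icc 0 (1/2)) := by
  have hc : Continuous fFun := by
    have h1 : Continuous fun x : ℝ => (1 - x) * Real.log (1 - x) :=
      Real.continuous_mul_log.comp (continuous_const.sub continuous_id)
    exact h1.neg
  apply monotoneOn_of_deriv_nonneg (convex_Icc _ _) hc.continuousOn
  · intro x hx
    rw [interior_Icc] at hx
    have hx1 : (1 : ℝ) - x ≠ 0 := by intro h; nlinarith [hx.2]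
    exact ((hasDerivAt_sub_mul_log hx1).neg.differentiableAt).differentiableWithinAt
  · intro x hx
    rw [interior_Icc] at hx
    have hx1 : (1 : ℝ) - x ≠ 0 := by intro h; nlinarith [hx.2]
    have hdf : HasDerivAt fFun (Real.log (1 - x) + 1) x := by
      have := (hasDerivAt_sub_mul_log hx1).neg; simp only [neg_neg] at this; exact this
    rw [hdf.deriv]
    have h12 : (1:ℝ)/2 ≤ 1 - x := by nlinarith [hx.2]
    have hlog : Real.log ((1:ℝ)/2) ≤ Real.log (1 - x) :=
      Real.log_le_log (by norm_num) h12
    have : Real.log ((1:ℝ)/2) = -Real.log 2 := by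
      rw [Real.log_div one_ne_zero (by norm_num), Real.log_one]; ring
    have h2 : Real.log 2 < 1 := by
      have := Real.log_two_lt_d9; linarith
    linarith

theorem stmt_12 (h2inv : ℝ → ℝ)
    (hinv : ∀ x ∈ Set.Icc (0 : ℝ) (1 / 2), h2inv (binEnt x) = x) :
    MonotoneOn (fun t => fFun (h2inv t)) (Set.Icc (0 : ℝ) (Real.log 2)) := by
  have h0 : binEnt 0 = 0 := by simp [binEnt]
  have hhalf : binEnt (1/2) = Real.log 2 := by
    have hl : Real.log ((1:ℝ)/2) = -Real.log 2 := by
      rw [Real.log_div one_ne_zero (by norm_num : (2:ℝ) ≠ 0), Real.log_one]; ring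
    have h12 : (1:ℝ) - 1/2 = 1/2 := by norm_num
    simp only [binEnt, h12, hl]; ring
  have key : Set.Icc (0 : ℝ) (Real.log 2) ⊆ binEnt '' Set.Icc 0 (1/2) := by
    have := intermediate_value_Icc (by norm_num : (0:ℝ) ≤ 1/2) binEnt_cont.continuousOn
    rwa [h0, hhalf] at this
  intro a ha b hb hab
  obtain ⟨x, hxm, hxa⟩ := key ha
  obtain ⟨y, hym, hyb⟩ := key hb
  simp only
  rw [← hxa, ← hyb, hinv x hxm, hinv y hym]
  exact fFun_mono hxm hym ((binEnt_strictMono.le_iff_le hxm hym).mp (by rw [hxa, hyb]; exact hab))
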